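/- Let 0 < a ≤ b be natural numbers. Then there exists a homogeneous polynomial G of degree b+1 in ℂ[y₀,y₁] lying in the ideal generated by y₀^{a+1} and y₁^{b+1}, such that G is a product of b+1 pairwise linearly independent linear forms (equivalently, G is a nonzero binary form of degree b+1 with b+1 distinct roots in ℙ¹(ℂ)). -/

import Mathlib

open MvPolynomial

/-- Pointwise factorization: `z^n + w^n` with distinct root ratios. -/
lemma scalar_factorization (n : ℕ) (hn : 0 < n) (z w : ℂ)
    (e : Fin n ≃ (Polynomial.nthRootsFinset n (1 : ℂ))) :
    z ^ n + w ^ n =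
      ∏ i : Fin n, (z - (Complex.exp (Real.pi * Complex.I / n) * (e i : ℂ)) * w) := by
  have hprim := Complex.isPrimitiveRoot_exp n hn.ne'
  set ω : ℂ := Complex.exp (Real.pi * Complex.I / n) with hω
  have hn0 : (n : ℂ) ≠ 0 := Nat.cast_ne_zero.mpr hn.ne'
  have hωn : ω ^ n = -1 := by
    rw [hω, ← Complex.exp_nat_mul, mul_div_cancel₀ _ hn0, Complex.exp_pi_mul_I]
  have key := hprim.pow_sub_pow_eq_prod_sub_mul (x := z) (y := ω * w) hn
  have reindex :
      ∏ ζ ∈ Polynomial.nthRootsFinset n (1 : ℂ), (z - ζ * (ω * w)) =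
        ∏ i : Fin n, (z - (ω * (e i : ℂ)) * w) := by
    rw [← Finset.prod_coe_sort, ← Equiv.prod_comp e (fun a => z - (a : ℂ) * (ω * w))]
    apply Finset.prod_congr rfl
    intro i _
    ring
  have : z ^ n - (ω * w) ^ n = z ^ n + w ^ n := by
    rw [mul_pow, hωn]; ring
  rw [← this, key, reindex]

/-- For `0 < a ≤ b`, there is a homogeneous polynomial `G` of degree `b + 1` in
`ℂ[y₀,y₁]` lying in the ideal `(y₀^{a+1}, y₁^{b+1})` which is a product of
`b + 1` pairwise linearly independent linear forms. -/
theorem exists_squarefree_form_in_perp_ideal_complex (a b : ℕ) (ha : 0 < a)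
    (hab : a ≤ b) :
    ∃ (G : MvPolynomial (Fin 2) ℂ) (L : Fin (b + 1) → MvPolynomial (Fin 2) ℂ),
      G.IsHomogeneous (b + 1) ∧
      G ∈ Ideal.span {(X 0 : MvPolynomial (Fin 2) ℂ) ^ (a + 1), X 1 ^ (b + 1)} ∧
      (∀ i, (L i).IsHomogeneous 1) ∧
      (∀ i j, i ≠ j → ∀ c : ℂ, L i ≠ c • L j) ∧
      G = ∏ i, L i := by
  classical
  set n : ℕ := b + 1 with hn
  have hn0 : 0 < n := Nat.succ_pos b
  have hprim := Complex.isPrimitiveRoot_exp n hn0.ne'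
  have hcard : (Polynomial.nthRootsFinset n (1 : ℂ)).card = n := hprim.card_nthRootsFinset
  let e : Fin n ≃ (Polynomial.nthRootsFinset n (1 : ℂ)) := (Finset.equivFinOfCardEq hcard).symm
  set ω : ℂ := Complex.exp (Real.pi * Complex.I / n) with hω
  have hω0 : ω ≠ 0 := Complex.exp_ne_zero _
  set r : Fin n → ℂ := fun i => ω * (e i : ℂ) with hr
  have hrinj : Function.Injective r := by
    intro i j hij
    exact e.injective (Subtype.ext (mul_left_cancel₀ hω0 hij))
  set L : Fin n → MvPolynomial (Fin 2) ℂ := fun i => X 0 - C (r i) * X 1 with hL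
  have hprod : (∏ i, L i) = (X 0 : MvPolynomial (Fin 2) ℂ) ^ n + X 1 ^ n := by
    apply MvPolynomial.funext
    intro x
    have := scalar_factorization n hn0 (x 0) (x 1) e
    simp only [map_prod, map_add, map_pow, eval_X, hL, map_sub, map_mul, eval_C]
    rw [← this]
  refine ⟨∏ i, L i, L, ?_, ?_, ?_, ?_, rfl⟩
  · -- homogeneous
    have := MvPolynomial.IsHomogeneous.prod Finset.univ L (fun _ => 1) ?_
    · simpa using this
    · intro i _
      apply MvPolynomial.IsHomogeneous.sub (isHomogeneous_X _ _)
      simpa using (isHomogeneous_C (Fin 2) (r i)).mul (isHomogeneous_X _ 1)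
  · -- ideal membership
    rw [hprod, Ideal.mem_span_pair]
    refine ⟨X 0 ^ (b - a), 1, ?_⟩
    rw [one_mul, ← pow_add, ← add_assoc, Nat.sub_add_cancel hab, hn]
  · intro i
    apply MvPolynomial.IsHomogeneous.sub (isHomogeneous_X _ _)
    simpa using (isHomogeneous_C (Fin 2) (r i)).mul (isHomogeneous_X _ 1)
  · -- pairwise independence
    intro i j hij c hc
    have h0 := congrArg (eval (fun k : Fin 2 => if k = 0 then (1:ℂ) else 0)) hc
    have h1 := congrArg (eval (fun k : Fin 2 => if k = 0 then (0:ℂ) else 1)) hc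
    rw [smul_eq_C_mul] at h0 h1
    simp only [hL, eval_sub, eval_mul, eval_C, eval_X, if_pos rfl,
      if_neg (by decide : ¬((1 : Fin 2) = 0))] at h0 h1
    norm_num at h0 h1
    exact hij (hrinj (by linear_combination h1 - r j * h0))
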